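/- arXiv:1802.03076 — 3 statements merged into one kernel-verified Lean document; each statement's English description precedes it below -/
import Mathlib

section
/- Let A be a unital associative k-algebra that is free as a k-module on a basis B = {φ_ω} such that the product of any two basis elements is a scalar multiple of a basis element: φ_α φ_β = μ_{α,β} φ_m with μ_{α,β} ∈ k. Then the autopoietic cochains form a subcomplex of the Hochschild cochain complex (Hom_k(A^{⊗*}, A), δ): if f is autopoietic in degree n then δf is autopoietic in degree n+1. The same holds for strictly autopoietic cochains. -/
variable {k A B : Type} [CommRing k] [Ring A] [Algebra k A]

/-- Hochschild cochains `Hom_k(A^{⊗n}, A)` for `A` free on the basis `B`, modeled by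
their values on tuples of basis elements. -/
abbrev ACochain (A B : Type) (n : ℕ) : Type := (Fin n → B) → A

/-- Simplicial cochains `Hom_k(A^{⊗n}, k)`, modeled by values on tuples of basis
elements. -/
abbrev SCochain (k B : Type) (n : ℕ) : Type := (Fin n → B) → k

/-- The ordered product `φ_1 φ_2 ⋯ φ_n ∈ A` of a tuple of basis elements. -/
noncomputable def aprod (bas : Module.Basis B k A) {n : ℕ} (φ : Fin n → B) : A :=
  (List.ofFn fun i => bas (φ i)).prod

/-- A cochain is (strictly) autopoietic if
`f(φ_1 ⊗ ⋯ ⊗ φ_n) = λ_{φ_1,…,φ_n} · (φ_1 φ_2 ⋯ φ_n)` for all basis elements `φ_i`. -/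
def IsAP (bas : Module.Basis B k A) {n : ℕ} (f : ACochain A B n) : Prop :=
  ∀ φ : Fin n → B, ∃ c : k, f φ = c • aprod bas φ

/-- Merge the `i`-th and `(i+1)`-st entries of a tuple of basis elements using the
basis-level product `m`. -/
def bmerge (m : B → B → B) {n : ℕ} (φ : Fin (n + 1) → B) (i : Fin n) : Fin n → B := fun j =>
  if (j : ℕ) < i then φ j.castSucc
  else if (j : ℕ) = i then m (φ j.castSucc) (φ j.succ)
  else φ j.succ

/-- The Hochschild coboundary, expressed via the structure constants
`φ_α φ_β = μ_{α,β} φ_{m(α,β)}`. -/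
noncomputable def adelta (bas : Module.Basis B k A) (μ : B → B → k) (m : B → B → B) (n : ℕ) :
    ACochain A B n →ₗ[k] ACochain A B (n + 1) :=
  (LinearMap.pi fun φ =>
      (LinearMap.mulLeft k (bas (φ 0))).comp (LinearMap.proj (Fin.tail φ)))
  + (∑ i : Fin n, LinearMap.pi fun φ =>
      (((-1 : k) ^ ((i : ℕ) + 1)) * μ (φ i.castSucc) (φ i.succ)) •
        (LinearMap.proj (bmerge m φ i) : ACochain A B n →ₗ[k] A))
  + ((-1 : k) ^ (n + 1)) •
      LinearMap.pi fun φ =>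
        (LinearMap.mulRight k (bas (φ (Fin.last n)))).comp (LinearMap.proj (Fin.init φ))

lemma aprod_succ (bas : Module.Basis B k A) {n : ℕ} (φ : Fin (n+1) → B) :
    aprod bas φ = bas (φ 0) * aprod bas (Fin.tail φ) := by
  simp [aprod, List.ofFn_succ, Fin.tail]

lemma aprod_init (bas : Module.Basis B k A) {n : ℕ} (φ : Fin (n+1) → B) :
    aprod bas φ = aprod bas (Fin.init φ) * bas (φ (Fin.last n)) := by
  simp only [aprod]
  rw [List.ofFn_succ']
  simp [Fin.init]

lemma bmerge_zero (m : B → B → B) {n : ℕ} (φ : Fin (n+2) → B) :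
    bmerge m φ 0 = Fin.cons (m (φ 0) (φ 1)) (Fin.tail (Fin.tail φ)) := by
  funext j
  refine Fin.cases ?_ (fun j => ?_) j <;> simp [bmerge, Fin.tail]

lemma bmerge_succ (m : B → B → B) {n : ℕ} (φ : Fin (n+2) → B) (j : Fin n) :
    bmerge m φ j.succ = Fin.cons (φ 0) (bmerge m (Fin.tail φ) j) := by
  funext i
  refine Fin.cases ?_ (fun i => ?_) i
  · simp [bmerge]
  · simp only [bmerge, Fin.cons_succ, Fin.tail, Fin.val_succ]
    rcases lt_trichotomy (i : ℕ) (j : ℕ) with h | h | h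
    · simp [h, Nat.succ_lt_succ h]
    · simp [h]
    · have h1 : ¬ (i:ℕ) < j := by omega
      have h2 : ¬ (i:ℕ) = j := by omega
      have h3 : ¬ (i:ℕ)+1 < j+1 := by omega
      have h4 : ¬ (i:ℕ)+1 = j+1 := by omega
      simp [h1,h2,h3,h4]

lemma aprod_bmerge (bas : Module.Basis B k A) (μ : B → B → k) (m : B → B → B)
    (hmul : ∀ a b : B, bas a * bas b = μ a b • bas (m a b)) :
    ∀ {n : ℕ} (φ : Fin (n+1) → B) (i : Fin n),
      μ (φ i.castSucc) (φ i.succ) • aprod bas (bmerge m φ i) = aprod bas φ := by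
  intro n
  induction n with
  | zero => exact fun φ i => i.elim0
  | succ n ih =>
    intro φ i
    refine Fin.cases ?_ (fun j => ?_) i
    · rw [bmerge_zero, aprod_succ bas (Fin.cons (m (φ 0) (φ 1)) (Fin.tail (Fin.tail φ)))]
      simp only [Fin.cons_zero, Fin.tail_cons]
      simp only [Fin.castSucc_zero, Fin.succ_zero_eq_one]
      rw [← smul_mul_assoc, ← hmul, aprod_succ bas φ, aprod_succ bas (Fin.tail φ)]
      simp [Fin.tail, mul_assoc]
    · rw [bmerge_succ, aprod_succ bas (Fin.cons (φ 0) (bmerge m (Fin.tail φ) j))]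
      simp only [Fin.cons_zero, Fin.tail_cons]
      have : φ j.succ.castSucc = (Fin.tail φ) j.castSucc := by
        simp [Fin.tail]
      rw [this, ← mul_smul_comm]
      have : φ j.succ.succ = (Fin.tail φ) j.succ := rfl
      rw [this, ih (Fin.tail φ) j, ← aprod_succ]

/-- For `A` a unital associative `k`-algebra, free as a `k`-module on a
basis `B` whose products satisfy `φ_α φ_β = μ_{α,β} φ_{m(α,β)}`, the (strictly)
autopoietic cochains form a subcomplex of the Hochschild cochain complex
`(Hom_k(A^{⊗*}, A), δ)`: if `f` is autopoietic in degree `n` then `δf` is autopoietic in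
degree `n + 1` (strictly autopoietic cochains included via the degree-zero condition
`f(1) = λ·e`, the empty product being the unit). -/
theorem stmt_7 (bas : Module.Basis B k A) (μ : B → B → k) (m : B → B → B)
    (hmul : ∀ a b : B, bas a * bas b = μ a b • bas (m a b)) :
    ∀ (n : ℕ) (f : ACochain A B n), IsAP bas f → IsAP bas (adelta bas μ m n f) := by
  intro n f hf φ
  choose c hc using hf
  refine ⟨c (Fin.tail φ) + (∑ i : Fin n, (-1 : k) ^ ((i : ℕ) + 1) * c (bmerge m φ i))
    + (-1 : k) ^ (n + 1) * c (Fin.init φ), ?_⟩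
  simp only [adelta, LinearMap.add_apply, LinearMap.smul_apply, Pi.add_apply, Pi.smul_apply,
    LinearMap.pi_apply, LinearMap.comp_apply, LinearMap.proj_apply, LinearMap.mulLeft_apply,
    LinearMap.mulRight_apply, LinearMap.sum_apply, Finset.sum_apply]
  rw [hc, hc]
  have hsum : ∀ i : Fin n,
      ((-1 : k) ^ ((i : ℕ) + 1) * μ (φ i.castSucc) (φ i.succ)) • f (bmerge m φ i)
        = ((-1 : k) ^ ((i : ℕ) + 1) * c (bmerge m φ i)) • aprod bas φ := by
    intro i
    rw [hc, smul_smul, mul_assoc, mul_comm (μ _ _), ← mul_assoc, mul_smul,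
      mul_smul, aprod_bmerge bas μ m hmul, ← mul_smul]
  rw [Finset.sum_congr rfl (fun i _ => hsum i)]
  rw [← Finset.sum_smul, add_smul, add_smul, mul_smul]
  congr 1
  · congr 1
    rw [aprod_succ bas φ, mul_smul_comm]
  · rw [aprod_init bas φ, smul_mul_assoc, smul_comm]
end

section
/- Let A be a unital associative k-algebra free as a k-module on a basis B with φ_α φ_β = μ_{α,β} φ_m (μ_{α,β} ∈ k) for all basis elements. If f ∈ Hom_k(A^{⊗p}, A) and g ∈ Hom_k(A^{⊗q}, A) are autopoietic, then the Gerstenhaber cup product f ⋅_G g ∈ Hom_k(A^{⊗(p+q)}, A), defined by (f ⋅_G g)(a_1 ⊗ ⋯ ⊗ a_{p+q}) = f(a_1 ⊗ ⋯ ⊗ a_p)·g(a_{p+1} ⊗ ⋯ ⊗ a_{p+q}), is autopoietic. -/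
variable {k A B : Type} [CommRing k] [Ring A] [Algebra k A]

/-- The Gerstenhaber cup product
`(f ⋅_G g)(a_1 ⊗ ⋯ ⊗ a_{p+q}) = f(a_1 ⊗ ⋯ ⊗ a_p) · g(a_{p+1} ⊗ ⋯ ⊗ a_{p+q})`. -/
def gcup {p q : ℕ} (f : ACochain A B p) (g : ACochain A B q) : ACochain A B (p + q) :=
  fun φ => f (fun i => φ (Fin.castAdd q i)) * g (fun i => φ (Fin.natAdd p i))

/-- If `f` and `g` are autopoietic Hochschild cochains on an algebra `A`
free on a basis closed under multiplication up to scalars, then their Gerstenhaber cup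
product `f ⋅_G g` is autopoietic. -/
theorem stmt_8 (bas : Module.Basis B k A) (μ : B → B → k) (m : B → B → B)
    (hmul : ∀ a b : B, bas a * bas b = μ a b • bas (m a b)) :
    ∀ (p q : ℕ) (f : ACochain A B p) (g : ACochain A B q),
      IsAP bas f → IsAP bas g → IsAP bas (gcup f g) := by
  intro p q f g hf hg φ
  obtain ⟨c, hc⟩ := hf fun i => φ (Fin.castAdd q i)
  obtain ⟨d, hd⟩ := hg fun i => φ (Fin.natAdd p i)
  refine ⟨c * d, ?_⟩
  simp only [gcup, hc, hd, aprod, smul_mul_smul_comm]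
  rw [List.ofFn_add, List.prod_append]
  rfl
end

section
/- Let A be a unital associative k-algebra free on a basis B with products of basis elements being scalar multiples of basis elements, scalars idempotent in k. Then Ψ : Hom_k(A^{⊗*}, k) → AP(A^{⊗*}, A) is multiplicative: Ψ(α ⋅_S β) = Ψ(α) ⋅_G Ψ(β), where ⋅_S is the simplicial cup product and ⋅_G the Gerstenhaber product. -/
variable {k A B : Type} [CommRing k] [Ring A] [Algebra k A]

/-- `Ψ(α)(φ_1 ⊗ ⋯ ⊗ φ_n) = α(φ_1 ⊗ ⋯ ⊗ φ_n)·(φ_1 φ_2 ⋯ φ_n)`. -/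
noncomputable def PsiA (bas : Module.Basis B k A) {n : ℕ} (α : SCochain k B n) : ACochain A B n :=
  fun φ => α φ • aprod bas φ

/-- The `i`-th face of the bar construction on basis tuples (`d_0` drops the first entry,
`d_i` multiplies adjacent entries via `m`, the last face drops the last entry). -/
def barFaceB (m : B → B → B) {n : ℕ} (i : ℕ) (φ : Fin (n + 1) → B) : Fin n → B := fun j =>
  if (j : ℕ) + 1 < i then φ j.castSucc
  else if (j : ℕ) + 1 = i then m (φ j.castSucc) (φ j.succ)
  else φ j.succ

/-- The structure-constant coefficient produced by the `i`-th bar face. -/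
def barCoef (μ : B → B → k) {n : ℕ} (i : ℕ) (φ : Fin (n + 1) → B) : k :=
  if h : 1 ≤ i ∧ i ≤ n then
    μ (φ ⟨i - 1, by omega⟩) (φ ⟨i, by omega⟩)
  else 1

/-- The simplicial coboundary `d^*`, the `Hom_k(-,k)`-dual of the bar differential
`d = Σ (-1)^i d_i`. -/
noncomputable def dstarA (μ : B → B → k) (m : B → B → B) (n : ℕ) :
    SCochain k B n →ₗ[k] SCochain k B (n + 1) :=
  ∑ i ∈ Finset.range (n + 2), LinearMap.pi fun φ =>
    (((-1 : k) ^ i) * barCoef μ i φ) •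
      (LinearMap.proj (barFaceB m i φ) : SCochain k B n →ₗ[k] k)

/-- The simplicial cup product
`(α ⋅_S β)(σ) = α(front p-face of σ) · β(back q-face of σ)`. -/
def scup {p q : ℕ} (α : SCochain k B p) (β : SCochain k B q) : SCochain k B (p + q) :=
  fun φ => α (fun i => φ (Fin.castAdd q i)) * β (fun i => φ (Fin.natAdd p i))

/-- `Ψ` is multiplicative: it carries the simplicial cup product to the
Gerstenhaber product, `Ψ(α ⋅_S β) = Ψ(α) ⋅_G Ψ(β)`. -/
theorem stmt_11 (bas : Module.Basis B k A) (μ : B → B → k) (m : B → B → B)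
    (hmul : ∀ a b : B, bas a * bas b = μ a b • bas (m a b))
    (hidem : ∀ a b : B, μ a b * μ a b = μ a b) :
    ∀ (p q : ℕ) (α : SCochain k B p) (β : SCochain k B q),
      PsiA bas (scup α β) = gcup (PsiA bas α) (PsiA bas β) := by
  intro p q α β
  funext φ
  have hsplit : aprod bas φ =
      aprod bas (fun i => φ (Fin.castAdd q i)) * aprod bas (fun i => φ (Fin.natAdd p i)) := by
    simp only [aprod]
    rw [← List.prod_append, ← List.ofFn_fin_append]
    refine congrArg List.prod (congrArg List.ofFn (funext fun i => ?_))
    induction i using Fin.addCases with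
    | left i => simp
    | right i => simp
  simp only [PsiA, scup, gcup, hsplit, smul_mul_assoc, mul_smul_comm, smul_smul,
    mul_comm]
end
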